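/- arXiv:2510.05677 — 2 statements merged into one kernel-verified Lean document; each statement's English description precedes it below -/
import Mathlib

section
/- Let D₁, D₂ be two open disks in the plane with D₁ ∩ D₂ ≠ ∅, with neither D₁ ⊆ D₂ nor D₂ ⊆ D₁. Let I, J be the two intersection points of the boundary circles ∂D₁ and ∂D₂, let α₁ be the arc of ∂D₁ between I and J disjoint from D₂, and α₂ the arc of ∂D₂ between I and J disjoint from D₁. If (A₁,B₁) is an open segment with endpoints A₁, B₁ ∈ α₁ and (A₂,B₂) an open segment with endpoints in α₂, and the two open segments intersect, then both segments coincide with the open segment (I,J). -/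
set_option maxHeartbeats 1000000

private lemma distSq (z w : ℂ) : dist z w ^ 2 = (z.re - w.re)^2 + (z.im - w.im)^2 := by
  rw [Complex.dist_eq, ← Complex.normSq_eq_norm_sq, Complex.normSq_apply, Complex.sub_re,
    Complex.sub_im]
  ring

private lemma two_circles {c₁ c₂ I J z : ℂ} {r₁ r₂ : ℝ}
    (hc : c₁ ≠ c₂) (hIJ : I ≠ J)
    (hI1 : dist I c₁ = r₁) (hI2 : dist I c₂ = r₂)
    (hJ1 : dist J c₁ = r₁) (hJ2 : dist J c₂ = r₂)
    (hz1 : dist z c₁ = r₁) (hz2 : dist z c₂ = r₂) : z = I ∨ z = J := by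
  have eI1 : (I.re - c₁.re)^2 + (I.im - c₁.im)^2 = r₁^2 := by rw [← distSq, hI1]
  have eI2 : (I.re - c₂.re)^2 + (I.im - c₂.im)^2 = r₂^2 := by rw [← distSq, hI2]
  have eJ1 : (J.re - c₁.re)^2 + (J.im - c₁.im)^2 = r₁^2 := by rw [← distSq, hJ1]
  have eJ2 : (J.re - c₂.re)^2 + (J.im - c₂.im)^2 = r₂^2 := by rw [← distSq, hJ2]
  have ez1 : (z.re - c₁.re)^2 + (z.im - c₁.im)^2 = r₁^2 := by rw [← distSq, hz1]
  have ez2 : (z.re - c₂.re)^2 + (z.im - c₂.im)^2 = r₂^2 := by rw [← distSq, hz2]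
  set u1 := z.re - I.re with hu1def
  set u2 := z.im - I.im with hu2def
  set v1 := J.re - I.re with hv1def
  set v2 := J.im - I.im with hv2def
  set d1 := c₂.re - c₁.re with hd1def
  set d2 := c₂.im - c₁.im with hd2def
  -- linear (radical axis) relations
  have hu : u1*d1 + u2*d2 = 0 := by
    simp only [hu1def, hu2def, hd1def, hd2def]
    linear_combination (ez1 - ez2 - (eI1 - eI2)) / 2
  have hv : v1*d1 + v2*d2 = 0 := by
    simp only [hv1def, hv2def, hd1def, hd2def]
    linear_combination (eJ1 - eJ2 - (eI1 - eI2)) / 2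
  have hdne : d1 ≠ 0 ∨ d2 ≠ 0 := by
    by_contra h
    push_neg at h
    obtain ⟨h1, h2⟩ := h
    apply hc
    apply Complex.ext
    · simp only [hd1def] at h1; linarith
    · simp only [hd2def] at h2; linarith
  have cross : u1*v2 - u2*v1 = 0 := by
    rcases hdne with h | h
    · have : (u1*v2 - u2*v1) * d1 = 0 := by linear_combination v2 * hu - u2 * hv
      exact (mul_eq_zero.mp this).resolve_right h
    · have : (u1*v2 - u2*v1) * d2 = 0 := by linear_combination u1 * hv - v1 * hu
      exact (mul_eq_zero.mp this).resolve_right h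
  have hvne : v1 ≠ 0 ∨ v2 ≠ 0 := by
    by_contra h
    push_neg at h
    obtain ⟨h1, h2⟩ := h
    apply hIJ
    apply Complex.ext
    · simp only [hv1def] at h1; linarith
    · simp only [hv2def] at h2; linarith
  have hvpos : 0 < v1^2 + v2^2 := by
    rcases hvne with h | h
    · have h1 : 0 < v1^2 := by positivity
      have h2 : 0 ≤ v2^2 := sq_nonneg v2
      linarith
    · have h1 : 0 < v2^2 := by positivity
      have h2 : 0 ≤ v1^2 := sq_nonneg v1
      linarith
  set s := (u1*v1 + u2*v2) / (v1^2 + v2^2) with hsdef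
  have hsu1 : u1 = s * v1 := by
    rw [hsdef]; field_simp; linear_combination v2 * cross
  have hsu2 : u2 = s * v2 := by
    rw [hsdef]; field_simp; linear_combination (-v1) * cross
  -- circle-1 quadratic relations
  have hq_u : u1^2 + u2^2 + 2*(u1*(I.re - c₁.re) + u2*(I.im - c₁.im)) = 0 := by
    simp only [hu1def, hu2def]; linear_combination ez1 - eI1
  have hq_v : v1^2 + v2^2 + 2*(v1*(I.re - c₁.re) + v2*(I.im - c₁.im)) = 0 := by
    simp only [hv1def, hv2def]; linear_combination eJ1 - eI1
  have hs01 : s * (s - 1) = 0 := by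
    have h2 : s*(s-1) * (v1^2+v2^2) = 0 := by
      have := hq_u
      rw [hsu1, hsu2] at this
      linear_combination this - s * hq_v
    exact (mul_eq_zero.mp h2).resolve_right (ne_of_gt hvpos)
  rcases mul_eq_zero.mp hs01 with h | h
  · left
    rw [h, zero_mul] at hsu1 hsu2
    apply Complex.ext
    · have := hsu1; simp only [hu1def] at this; linarith
    · have := hsu2; simp only [hu2def] at this; linarith
  · right
    have hs1 : s = 1 := by linarith [sub_eq_zero.mp h]
    rw [hs1, one_mul] at hsu1 hsu2
    apply Complex.ext
    · have := hsu1; simp only [hu1def, hv1def] at this; linarith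
    · have := hsu2; simp only [hu2def, hv2def] at this; linarith

private def fval (c₁ c₂ : ℂ) (r₁ r₂ : ℝ) (z : ℂ) : ℝ :=
  (z.re - c₂.re)^2 + (z.im - c₂.im)^2 - r₂^2 - (z.re - c₁.re)^2 - (z.im - c₁.im)^2 + r₁^2

private lemma fval_affine (c₁ c₂ : ℂ) (r₁ r₂ : ℝ) (x y : ℂ) {a b : ℝ} (hab : a + b = 1) :
    fval c₁ c₂ r₁ r₂ (a • x + b • y) = a * fval c₁ c₂ r₁ r₂ x + b * fval c₁ c₂ r₁ r₂ y := by
  have hb : b = 1 - a := by linarith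
  subst hb
  simp only [fval, Complex.real_smul, Complex.add_re, Complex.add_im, Complex.mul_re,
    Complex.mul_im, Complex.ofReal_re, Complex.ofReal_im]
  ring

private lemma conv_zero {a b x y : ℝ} (ha : 0 < a) (hb : 0 < b) (hx : 0 ≤ x) (hy : 0 ≤ y)
    (h : a * x + b * y = 0) : x = 0 ∧ y = 0 := by
  have hax : a * x = 0 := le_antisymm (by nlinarith [mul_nonneg hb.le hy])
    (mul_nonneg ha.le hx)
  have hby : b * y = 0 := by linarith
  exact ⟨(mul_eq_zero.mp hax).resolve_left ha.ne', (mul_eq_zero.mp hby).resolve_left hb.ne'⟩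

private lemma sq_eq_dist {d r : ℝ} (hd : 0 ≤ d) (hr : 0 ≤ r) (h : d^2 = r^2) : d = r := by
  have h3 : (d - r) * (d + r) = 0 := by linear_combination h
  rcases mul_eq_zero.mp h3 with h' | h'
  · linarith
  · have : d = 0 := by linarith
    have : r = 0 := by linarith
    linarith

private lemma on_both₁ {c₁ c₂ w : ℂ} {r₁ r₂ : ℝ} (hr₂ : 0 ≤ r₂) (h1 : dist w c₁ = r₁)
    (h0 : fval c₁ c₂ r₁ r₂ w = 0) : dist w c₂ = r₂ := by
  have e1 : (w.re - c₁.re)^2 + (w.im - c₁.im)^2 = r₁^2 := by rw [← distSq, h1]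
  apply sq_eq_dist dist_nonneg hr₂
  rw [distSq]
  simp only [fval] at h0
  linear_combination h0 + e1

private lemma on_both₂ {c₁ c₂ w : ℂ} {r₁ r₂ : ℝ} (hr₁ : 0 ≤ r₁) (h2 : dist w c₂ = r₂)
    (h0 : fval c₁ c₂ r₁ r₂ w = 0) : dist w c₁ = r₁ := by
  have e2 : (w.re - c₂.re)^2 + (w.im - c₂.im)^2 = r₂^2 := by rw [← distSq, h2]
  apply sq_eq_dist dist_nonneg hr₁
  rw [distSq]
  simp only [fval] at h0
  linear_combination e2 - h0

private lemma sphere_f {c₁ c₂ w : ℂ} {r₁ r₂ : ℝ} (hr : 0 ≤ r₂) (h1 : dist w c₁ = r₁)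
    (h2 : r₂ ≤ dist w c₂) : 0 ≤ fval c₁ c₂ r₁ r₂ w := by
  have e1 : (w.re - c₁.re)^2 + (w.im - c₁.im)^2 = r₁^2 := by rw [← distSq, h1]
  have e2 : r₂^2 ≤ (w.re - c₂.re)^2 + (w.im - c₂.im)^2 := by
    rw [← distSq]
    have hd : (0:ℝ) ≤ dist w c₂ := dist_nonneg
    nlinarith [mul_nonneg (sub_nonneg.mpr h2) (by linarith : (0:ℝ) ≤ dist w c₂ + r₂)]
  simp only [fval]
  nlinarith

private lemma sphere_g {c₁ c₂ w : ℂ} {r₁ r₂ : ℝ} (hr : 0 ≤ r₁) (h2 : dist w c₂ = r₂)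
    (h1 : r₁ ≤ dist w c₁) : fval c₁ c₂ r₁ r₂ w ≤ 0 := by
  have e2 : (w.re - c₂.re)^2 + (w.im - c₂.im)^2 = r₂^2 := by rw [← distSq, h2]
  have e1 : r₁^2 ≤ (w.re - c₁.re)^2 + (w.im - c₁.im)^2 := by
    rw [← distSq]
    have hd : (0:ℝ) ≤ dist w c₁ := dist_nonneg
    nlinarith [mul_nonneg (sub_nonneg.mpr h1) (by linarith : (0:ℝ) ≤ dist w c₁ + r₁)]
  simp only [fval]
  nlinarith

/-- Two overlapping disks, neither contained in the other; `I, J` the intersection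
points of their boundary circles; `α₁ = ∂D₁ \ D₂` and `α₂ = ∂D₂ \ D₁` the arcs of each
boundary circle disjoint from the other disk.  If an open segment with endpoints on `α₁`
meets an open segment with endpoints on `α₂`, both coincide with the open segment `(I,J)`. -/
theorem stmt_1 (c₁ c₂ I J A₁ B₁ A₂ B₂ : ℂ) (r₁ r₂ : ℝ) (hr₁ : 0 < r₁) (hr₂ : 0 < r₂)
    (hinter : (Metric.ball c₁ r₁ ∩ Metric.ball c₂ r₂).Nonempty)
    (h12 : ¬ Metric.ball c₁ r₁ ⊆ Metric.ball c₂ r₂)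
    (h21 : ¬ Metric.ball c₂ r₂ ⊆ Metric.ball c₁ r₁)
    (hIJ : I ≠ J)
    (hI : I ∈ Metric.sphere c₁ r₁ ∩ Metric.sphere c₂ r₂)
    (hJ : J ∈ Metric.sphere c₁ r₁ ∩ Metric.sphere c₂ r₂)
    (hA₁ : A₁ ∈ Metric.sphere c₁ r₁ \ Metric.ball c₂ r₂)
    (hB₁ : B₁ ∈ Metric.sphere c₁ r₁ \ Metric.ball c₂ r₂)
    (hA₂ : A₂ ∈ Metric.sphere c₂ r₂ \ Metric.ball c₁ r₁)
    (hB₂ : B₂ ∈ Metric.sphere c₂ r₂ \ Metric.ball c₁ r₁)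
    (hAB₁ : A₁ ≠ B₁) (hAB₂ : A₂ ≠ B₂)
    (hmeet : (openSegment ℝ A₁ B₁ ∩ openSegment ℝ A₂ B₂).Nonempty) :
    openSegment ℝ A₁ B₁ = openSegment ℝ I J ∧ openSegment ℝ A₂ B₂ = openSegment ℝ I J := by
  obtain ⟨hI1, hI2⟩ := hI
  obtain ⟨hJ1, hJ2⟩ := hJ
  rw [Metric.mem_sphere] at hI1 hI2 hJ1 hJ2
  have hc : c₁ ≠ c₂ := by
    rintro rfl
    exact h12 (by rw [← hI1, hI2])
  have hA₁s : dist A₁ c₁ = r₁ := Metric.mem_sphere.mp hA₁.1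
  have hB₁s : dist B₁ c₁ = r₁ := Metric.mem_sphere.mp hB₁.1
  have hA₂s : dist A₂ c₂ = r₂ := Metric.mem_sphere.mp hA₂.1
  have hB₂s : dist B₂ c₂ = r₂ := Metric.mem_sphere.mp hB₂.1
  have fA₁ : 0 ≤ fval c₁ c₂ r₁ r₂ A₁ :=
    sphere_f hr₂.le hA₁s (not_lt.mp (fun h => hA₁.2 (Metric.mem_ball.mpr h)))
  have fB₁ : 0 ≤ fval c₁ c₂ r₁ r₂ B₁ :=
    sphere_f hr₂.le hB₁s (not_lt.mp (fun h => hB₁.2 (Metric.mem_ball.mpr h)))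
  have fA₂ : fval c₁ c₂ r₁ r₂ A₂ ≤ 0 :=
    sphere_g hr₁.le hA₂s (not_lt.mp (fun h => hA₂.2 (Metric.mem_ball.mpr h)))
  have fB₂ : fval c₁ c₂ r₁ r₂ B₂ ≤ 0 :=
    sphere_g hr₁.le hB₂s (not_lt.mp (fun h => hB₂.2 (Metric.mem_ball.mpr h)))
  obtain ⟨P, hP1, hP2⟩ := hmeet
  obtain ⟨a, b, ha, hb, hab, habP⟩ := hP1
  obtain ⟨a', b', ha', hb', hab', habP'⟩ := hP2
  have hfP1 : fval c₁ c₂ r₁ r₂ P = a * fval c₁ c₂ r₁ r₂ A₁ + b * fval c₁ c₂ r₁ r₂ B₁ := by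
    rw [← habP]; exact fval_affine c₁ c₂ r₁ r₂ A₁ B₁ hab
  have hfP2 : fval c₁ c₂ r₁ r₂ P = a' * fval c₁ c₂ r₁ r₂ A₂ + b' * fval c₁ c₂ r₁ r₂ B₂ := by
    rw [← habP']; exact fval_affine c₁ c₂ r₁ r₂ A₂ B₂ hab'
  have hfP0 : fval c₁ c₂ r₁ r₂ P = 0 := by
    have h1 : 0 ≤ a * fval c₁ c₂ r₁ r₂ A₁ + b * fval c₁ c₂ r₁ r₂ B₁ := by
      have := mul_nonneg ha.le fA₁
      have := mul_nonneg hb.le fB₁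
      linarith
    have h2 : a' * fval c₁ c₂ r₁ r₂ A₂ + b' * fval c₁ c₂ r₁ r₂ B₂ ≤ 0 := by
      have := mul_nonpos_of_nonneg_of_nonpos ha'.le fA₂
      have := mul_nonpos_of_nonneg_of_nonpos hb'.le fB₂
      linarith
    rw [hfP1] at *
    rw [← hfP1] at hfP2 ⊢
    linarith [hfP2 ▸ h2, hfP1 ▸ h1]
  obtain ⟨fA₁0, fB₁0⟩ := conv_zero ha hb fA₁ fB₁ (by linarith [hfP1 ▸ hfP0] : a * fval c₁ c₂ r₁ r₂ A₁ + b * fval c₁ c₂ r₁ r₂ B₁ = 0)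
  obtain ⟨fA₂0, fB₂0⟩ := conv_zero ha' hb' (neg_nonneg.mpr fA₂) (neg_nonneg.mpr fB₂)
    (by linarith [hfP2 ▸ hfP0] : a' * -fval c₁ c₂ r₁ r₂ A₂ + b' * -fval c₁ c₂ r₁ r₂ B₂ = 0)
  have fA₂0 : fval c₁ c₂ r₁ r₂ A₂ = 0 := by linarith
  have fB₂0 : fval c₁ c₂ r₁ r₂ B₂ = 0 := by linarith
  have memA₁ : A₁ = I ∨ A₁ = J :=
    two_circles hc hIJ hI1 hI2 hJ1 hJ2 hA₁s (on_both₁ hr₂.le hA₁s fA₁0)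
  have memB₁ : B₁ = I ∨ B₁ = J :=
    two_circles hc hIJ hI1 hI2 hJ1 hJ2 hB₁s (on_both₁ hr₂.le hB₁s fB₁0)
  have memA₂ : A₂ = I ∨ A₂ = J :=
    two_circles hc hIJ hI1 hI2 hJ1 hJ2 (on_both₂ hr₁.le hA₂s fA₂0) hA₂s
  have memB₂ : B₂ = I ∨ B₂ = J :=
    two_circles hc hIJ hI1 hI2 hJ1 hJ2 (on_both₂ hr₁.le hB₂s fB₂0) hB₂s
  constructor
  · rcases memA₁ with rfl | rfl <;> rcases memB₁ with rfl | rfl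
    · exact absurd rfl hAB₁
    · rfl
    · exact openSegment_symm ℝ _ _
    · exact absurd rfl hAB₁
  · rcases memA₂ with rfl | rfl <;> rcases memB₂ with rfl | rfl
    · exact absurd rfl hAB₂
    · rfl
    · exact openSegment_symm ℝ _ _
    · exact absurd rfl hAB₂
end

section
/- Let f be holomorphic on the sector S = {z ∈ ℂ : |z| > r, |arg z − θ| < α} with 0 < α < π, and suppose f(z) ~ λ z^β as |z| → ∞ in S, for some λ ∈ ℂ*, β ∈ ℂ and a fixed branch of z^β on S. Then for every α′ < α, f′(z) ~ (β/z) · f(z) as |z| → ∞ within the subsector {|arg z − θ| < α′}. -/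
open Filter Complex Topology Real

lemma aux_extract {g : ℂ → ℂ} {S : Set ℂ} {l : ℂ}
    (h : Tendsto g (comap (fun z : ℂ => ‖z‖) atTop ⊓ 𝓟 S) (𝓝 l))
    {ε : ℝ} (hε : 0 < ε) : ∃ R : ℝ, ∀ z ∈ S, R ≤ ‖z‖ → ‖g z - l‖ < ε := by
  have h2 := Metric.tendsto_nhds.mp h ε hε
  rw [eventually_inf_principal, eventually_comap, eventually_atTop] at h2
  obtain ⟨R, hR⟩ := h2
  exact ⟨R, fun z hz hRz => by
    simpa [dist_eq_norm] using hR (‖z‖) hRz z rfl hz⟩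

lemma aux_tendsto {g : ℂ → ℂ} {S : Set ℂ}
    (h : ∀ ε > 0, ∃ R : ℝ, ∀ z ∈ S, R ≤ ‖z‖ → ‖g z‖ < ε) :
    Tendsto g (comap (fun z : ℂ => ‖z‖) atTop ⊓ 𝓟 S) (𝓝 0) := by
  rw [Metric.tendsto_nhds]
  intro ε hε
  obtain ⟨R, hR⟩ := h ε hε
  rw [eventually_inf_principal, eventually_comap, eventually_atTop]
  exact ⟨R, fun b hb z hzb hz => by
    simpa [dist_eq_norm] using hR z hz (hzb ▸ hb)⟩

lemma aux_arg {u v : ℂ} {c : ℝ} (hu : u ≠ 0) (hc0 : 0 ≤ c) (hc2 : c ≤ 1/2)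
    (hd : ‖v / u - 1‖ ≤ c) (hsum : |Complex.arg u| + π * c < π) :
    |Complex.arg v| ≤ |Complex.arg u| + π * c := by
  have hπ := Real.pi_pos
  set d := v / u with hd_def
  have hdre : (1:ℝ)/2 ≤ d.re := by
    have h1 : |(d - 1).re| ≤ ‖d - 1‖ := Complex.abs_re_le_norm _
    have h2 : |d.re - 1| ≤ c := by simpa using h1.trans hd
    linarith [(abs_le.mp h2).1]
  have him : |d.im| ≤ c := by
    have h1 : |(d - 1).im| ≤ ‖d - 1‖ := Complex.abs_im_le_norm _
    simpa using h1.trans hd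
  have hd0 : d ≠ 0 := fun h => by simp [h] at hdre; linarith
  have hv : v = u * d := by rw [hd_def]; field_simp
  have habsd : (1:ℝ)/2 ≤ ‖d‖ := le_trans hdre ((Complex.re_le_norm d))
  have hsind : |Real.sin d.arg| ≤ 2 * c := by
    rw [Complex.sin_arg, abs_div, _root_.abs_of_nonneg (norm_nonneg d)]
    rw [div_le_iff₀ (by linarith)]
    nlinarith
  have hargd2 : |d.arg| < π / 2 :=
    Complex.abs_arg_lt_pi_div_two_iff.mpr (Or.inl (by linarith))
  have hargd : |d.arg| ≤ π * c := by
    have key : 2 / π * |d.arg| ≤ 2 * c := by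
      rcases le_or_gt 0 d.arg with h | h
      · rw [_root_.abs_of_nonneg h]
        calc 2 / π * d.arg ≤ Real.sin d.arg :=
              Real.mul_le_sin h (by rw [_root_.abs_of_nonneg h] at hargd2; linarith)
          _ ≤ |Real.sin d.arg| := le_abs_self _
          _ ≤ 2 * c := hsind
      · rw [_root_.abs_of_neg h]
        calc 2 / π * (-d.arg) ≤ Real.sin (-d.arg) :=
              Real.mul_le_sin (by linarith) (by rw [_root_.abs_of_neg h] at hargd2; linarith)
          _ = -Real.sin d.arg := Real.sin_neg _
          _ ≤ |Real.sin d.arg| := neg_le_abs _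
          _ ≤ 2 * c := hsind
    have h3 := mul_le_mul_of_nonneg_left key (by positivity : (0:ℝ) ≤ π / 2)
    have h4 : π / 2 * (2 / π * |d.arg|) = |d.arg| := by field_simp
    rw [h4] at h3
    linarith
  have harg_add : (u * d).arg = u.arg + d.arg := by
    apply Complex.arg_mul hu hd0
    constructor
    · have := neg_abs_le u.arg
      have := neg_abs_le d.arg
      linarith
    · have := le_abs_self u.arg
      have := le_abs_self d.arg
      linarith
  rw [hv, harg_add]
  calc |u.arg + d.arg| ≤ |u.arg| + |d.arg| := abs_add_le _ _
    _ ≤ |u.arg| + π * c := by linarith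

lemma aux_alg (z A B C β : ℂ) (hz : z ≠ 0) (hB : B ≠ 0) (hC : C ≠ 0) :
    z * (A * C + B * (C * (β / z))) / (B * C) = β + z * A / B := by
  field_simp
  ring

open Filter in
/-- If `f` is holomorphic on the sector `S = {|z| > r, |arg(z e^{-iθ})| < α}` (`0 < α < π`)
and `f(z) ~ λ z^β` there (for a fixed continuous branch `z^β = exp(β L z)`, `L` a branch of
log on `S`), then `f'(z) ~ (β/z) f(z)`, i.e. `z f'(z)/f(z) → β`, as `|z| → ∞` in any
subsector of half-opening `α' < α`. -/
theorem stmt_10 (r θ α : ℝ) (hα : 0 < α) (hαπ : α < Real.pi)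
    (f L : ℂ → ℂ) (lam β : ℂ) (hlam : lam ≠ 0)
    (S : Set ℂ)
    (hS : S = {z : ℂ | r < ‖z‖ ∧
      |Complex.arg (z * Complex.exp (-(θ : ℂ) * Complex.I))| < α})
    (hf : DifferentiableOn ℂ f S)
    (hLc : ContinuousOn L S) (hL : ∀ z ∈ S, Complex.exp (L z) = z)
    (hasym : Tendsto (fun z => f z / (lam * Complex.exp (β * L z)))
      (comap (fun z : ℂ => ‖z‖) atTop ⊓ 𝓟 S) (nhds 1)) :
    ∀ α' : ℝ, α' < α →
      Tendsto (fun z => z * deriv f z / f z)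
        (comap (fun z : ℂ => ‖z‖) atTop ⊓
          𝓟 {z : ℂ | r < ‖z‖ ∧
            |Complex.arg (z * Complex.exp (-(θ : ℂ) * Complex.I))| < α'})
        (nhds β) := by
  intro α' hα'
  set e : ℂ := Complex.exp (-(θ : ℂ) * Complex.I) with he_def
  rcases le_or_gt α' 0 with hα'0 | hα'0
  · have hempty : {z : ℂ | r < ‖z‖ ∧ |Complex.arg (z * e)| < α'} = ∅ := by
      ext z
      simp only [Set.mem_setOf_eq, Set.mem_empty_iff_false, iff_false, not_and]
      intro _ h2
      linarith [abs_nonneg (Complex.arg (z * e))]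
    rw [hempty, Filter.principal_empty, inf_bot_eq]
    exact tendsto_bot
  -- nontrivial case
  have hπ := Real.pi_pos
  have h0S : (0:ℂ) ∉ S := fun h0 => Complex.exp_ne_zero (L 0) (hL 0 h0)
  have hzne : ∀ z ∈ S, z ≠ 0 := fun z hz h => h0S (h ▸ hz)
  have he0 : e ≠ 0 := Complex.exp_ne_zero _
  have hSopen : IsOpen S := by
    rw [isOpen_iff_mem_nhds]
    intro z hz
    have hz' := hz
    rw [hS] at hz'
    obtain ⟨h1, h2⟩ := hz'
    have hz0 : z ≠ 0 := hzne z hz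
    have hu0 : z * e ≠ 0 := mul_ne_zero hz0 he0
    have hslit : z * e ∈ Complex.slitPlane := by
      rw [Complex.mem_slitPlane_iff_arg]
      refine ⟨fun h => ?_, hu0⟩
      rw [h] at h2
      rw [_root_.abs_of_pos hπ] at h2
      linarith
    have hc1 : ContinuousAt (fun w : ℂ => ‖w‖) z := continuous_norm.continuousAt
    have hc2 : ContinuousAt (fun w : ℂ => |Complex.arg (w * e)|) z := by
      have hm : ContinuousAt (fun w : ℂ => w * e) z := (continuous_mul_right e).continuousAt
      have harg := ContinuousAt.comp (x := z) (Complex.continuousAt_arg hslit) hm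
      simpa [Function.comp_def] using harg.abs
    have e1 := hc1 (Ioi_mem_nhds h1)
    have e2 := hc2 (Iio_mem_nhds h2)
    rw [hS]
    exact Filter.mem_of_superset (Filter.inter_mem e1 e2) (fun w hw => ⟨hw.1, hw.2⟩)
  have hLder : ∀ z ∈ S, HasDerivAt L z⁻¹ z := by
    intro z hz
    have h1 : ContinuousAt L z := hLc.continuousAt (hSopen.mem_nhds hz)
    have h2 : HasStrictDerivAt Complex.exp (Complex.exp (L z)) (L z) :=
      Complex.hasStrictDerivAt_exp _
    rw [hL z hz] at h2
    have h3 : ∀ᶠ w in 𝓝 z, Complex.exp (L w) = w := by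
      filter_upwards [hSopen.mem_nhds hz] with w hw using hL w hw
    exact (HasStrictDerivAt.of_local_left_inverse h1 h2 (hzne z hz) h3).hasDerivAt
  set E : ℂ → ℂ := fun z => lam * Complex.exp (β * L z) with hE_def
  have hEne : ∀ z, E z ≠ 0 := fun z => mul_ne_zero hlam (Complex.exp_ne_zero _)
  have hEder : ∀ z ∈ S, HasDerivAt E (E z * (β / z)) z := by
    intro z hz
    have h1 : HasDerivAt (fun w => β * L w) (β * z⁻¹) z := (hLder z hz).const_mul β
    have h2 := h1.cexp
    have h3 := h2.const_mul lam
    refine HasDerivAt.congr_deriv h3 ?_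
    show _ = lam * Complex.exp (β * L z) * (β / z)
    ring
  set g : ℂ → ℂ := fun z => f z / E z with hg_def
  have hgd : DifferentiableOn ℂ g S :=
    hf.div (fun z hz => ((hEder z hz).differentiableAt).differentiableWithinAt)
      (fun z _ => hEne z)
  -- key pointwise identity
  have key : ∀ z ∈ S, g z ≠ 0 →
      z * deriv f z / f z = β + z * deriv g z / g z := by
    intro z hz hgz0
    have hz0 : z ≠ 0 := hzne z hz
    have hgz : HasDerivAt g (deriv g z) z :=
      (hgd.differentiableAt (hSopen.mem_nhds hz)).hasDerivAt
    have hfeq : f =ᶠ[𝓝 z] fun w => g w * E w := by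
      filter_upwards [hSopen.mem_nhds hz] with w _
      simp only [hg_def]
      rw [div_mul_cancel₀ _ (hEne w)]
    have hfz : deriv f z = deriv g z * E z + g z * (E z * (β / z)) := by
      rw [hfeq.deriv_eq]
      exact (hgz.mul (hEder z hz)).deriv
    have hfval : f z = g z * E z := by
      simp only [hg_def]
      rw [div_mul_cancel₀ _ (hEne z)]
    rw [hfz, hfval]
    exact aux_alg z (deriv g z) (g z) (E z) β hz0 hgz0 (hEne z)
  -- geometric setup
  set c : ℝ := min (1/2) ((α - α') / (2 * π)) with hc_def
  have hc0 : 0 < c := lt_min (by norm_num) (div_pos (by linarith) (by positivity))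
  have hc2 : c ≤ 1/2 := min_le_left _ _
  have hπc : π * c ≤ (α - α') / 2 := by
    have : c ≤ (α - α') / (2 * π) := min_le_right _ _
    calc π * c ≤ π * ((α - α') / (2 * π)) := by nlinarith
      _ = (α - α') / 2 := by field_simp
  set S' : Set ℂ := {z : ℂ | r < ‖z‖ ∧ |Complex.arg (z * e)| < α'} with hS'_def
  have hsub : S' ⊆ S := by
    rw [hS]
    rintro z ⟨h1, h2⟩
    exact ⟨h1, lt_trans h2 hα'⟩
  have hball : ∀ z ∈ S', 2 * |r| + 1 ≤ ‖z‖ →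
      ∀ w ∈ Metric.closedBall z (c * ‖z‖),
        (w ∈ S ∧ ‖z‖ / 2 ≤ ‖w‖) := by
    intro z hz hzbig w hw
    obtain ⟨h1, h2⟩ := hz
    have hzpos : 0 < ‖z‖ := by linarith [abs_nonneg r]
    have hz0 : z ≠ 0 := fun h => by simp [h] at hzpos
    have hwz : ‖w - z‖ ≤ c * ‖z‖ := by
      rw [Metric.mem_closedBall, Complex.dist_eq] at hw
      exact hw
    have habsw : ‖z‖ / 2 ≤ ‖w‖ := by
      have h3 : ‖z‖ - ‖w‖ ≤ ‖w - z‖ := by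
        rw [norm_sub_rev w z]
        exact norm_sub_norm_le z w
      nlinarith
    have hw0 : w ≠ 0 := fun h => by
      rw [h] at habsw
      simp at habsw
      linarith
    refine ⟨?_, habsw⟩
    rw [hS]
    refine ⟨by linarith [le_abs_self r], ?_⟩
    have hu0 : z * e ≠ 0 := mul_ne_zero hz0 he0
    have hdq : ‖(w * e) / (z * e) - 1‖ ≤ c := by
      have h4 : (w * e) / (z * e) - 1 = (w - z) / z := by
        field_simp
      rw [h4, norm_div, div_le_iff₀ hzpos]
      exact hwz
    have hsum : |Complex.arg (z * e)| + π * c < π := by linarith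
    have hfin := aux_arg hu0 hc0.le hc2 hdq hsum
    calc |Complex.arg (w * e)| ≤ |Complex.arg (z * e)| + π * c := hfin
      _ < α := by linarith
  -- main tendsto to zero
  have hzero : Tendsto (fun z => z * deriv g z / g z)
      (comap (fun z : ℂ => ‖z‖) atTop ⊓ 𝓟 S') (𝓝 0) := by
    apply aux_tendsto
    intro ε hε
    set ε' : ℝ := min (1/2) (c * ε / 4) with hε'_def
    have hε'0 : 0 < ε' := lt_min (by norm_num) (by positivity)
    obtain ⟨R, hR⟩ := aux_extract hasym hε'0
    refine ⟨max (2 * |R| + 1) (2 * |r| + 1), fun z hz hRz => ?_⟩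
    have hzS : z ∈ S := hsub hz
    have hzbig : 2 * |r| + 1 ≤ ‖z‖ := le_trans (le_max_right _ _) hRz
    have hzR : 2 * |R| + 1 ≤ ‖z‖ := le_trans (le_max_left _ _) hRz
    have hzpos : 0 < ‖z‖ := by linarith [abs_nonneg r]
    have hz0 : z ≠ 0 := fun h => by simp [h] at hzpos
    have hcz : 0 < c * ‖z‖ := by positivity
    have hbb := hball z hz hzbig
    have hsubS : Metric.closedBall z (c * ‖z‖) ⊆ S := fun w hw => (hbb w hw).1
    have hdiff : DiffContOnCl ℂ (fun w => g w - 1) (Metric.ball z (c * ‖z‖)) := by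
      apply DifferentiableOn.diffContOnCl
      apply (hgd.sub (differentiableOn_const 1)).mono
      exact le_trans Metric.closure_ball_subset_closedBall hsubS
    have hC : ∀ w ∈ Metric.sphere z (c * ‖z‖), ‖g w - 1‖ ≤ ε' := by
      intro w hw
      have hw' : w ∈ Metric.closedBall z (c * ‖z‖) := Metric.sphere_subset_closedBall hw
      obtain ⟨hwS, hwabs⟩ := hbb w hw'
      have hRw : R ≤ ‖w‖ := by linarith [le_abs_self R]
      exact (hR w hwS hRw).le
    have hdb := Complex.norm_deriv_le_of_forall_mem_sphere_norm_le hcz hdiff hC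
    rw [deriv_sub_const] at hdb
    have hgz1 : ‖g z - 1‖ < ε' := hR z hzS (by linarith [le_abs_self R])
    have hgzlb : 1/2 ≤ ‖g z‖ := by
      have h5 : ‖(1:ℂ)‖ ≤ ‖(1:ℂ) - g z‖ + ‖g z‖ := by
        calc ‖(1:ℂ)‖ = ‖((1:ℂ) - g z) + g z‖ := by ring_nf
          _ ≤ ‖(1:ℂ) - g z‖ + ‖g z‖ := norm_add_le _ _
      rw [norm_sub_rev] at h5
      have h6 : ‖(1:ℂ)‖ = 1 := norm_one
      have hε'half : ε' ≤ 1/2 := min_le_left _ _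
      linarith
    have hgz0 : g z ≠ 0 := fun h => by
      rw [h] at hgzlb
      simp at hgzlb
      linarith
    have hnorm : ‖z * deriv g z / g z‖ = ‖z‖ * ‖deriv g z‖ / ‖g z‖ := by
      rw [norm_div, norm_mul]
    rw [hnorm]
    have hnum : ‖z‖ * ‖deriv g z‖ ≤ ε' / c := by
      calc ‖z‖ * ‖deriv g z‖ ≤ ‖z‖ * (ε' / (c * ‖z‖)) :=
            mul_le_mul_of_nonneg_left hdb hzpos.le
        _ = ε' / c := by field_simp
    have hb2 : ‖z‖ * ‖deriv g z‖ / ‖g z‖ ≤ (ε' / c) / (1/2) :=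
      div_le_div₀ (by positivity) hnum (by norm_num) hgzlb
    have hlast : (ε' / c) / (1/2) ≤ ε / 2 := by
      have h6 : ε' ≤ c * ε / 4 := min_le_right _ _
      have h7 : (ε' / c) / (1/2) = 2 * ε' / c := by ring
      rw [h7, div_le_iff₀ hc0]
      nlinarith
    linarith
  -- eventual identity
  have heq : ∀ᶠ z in (comap (fun z : ℂ => ‖z‖) atTop ⊓ 𝓟 S'),
      z * deriv f z / f z = β + z * deriv g z / g z := by
    obtain ⟨R, hR⟩ := aux_extract hasym (by norm_num : (0:ℝ) < 1/2)
    rw [eventually_inf_principal, eventually_comap, eventually_atTop]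
    refine ⟨R, fun b hb z hzb hz => ?_⟩
    have hzS : z ∈ S := hsub hz
    have hg1 : ‖g z - 1‖ < 1/2 := hR z hzS (hzb ▸ hb)
    have hgz0 : g z ≠ 0 := by
      intro h
      rw [h] at hg1
      simp at hg1
      norm_num at hg1
    exact key z hzS hgz0
  have hfinal : Tendsto (fun z => β + z * deriv g z / g z)
      (comap (fun z : ℂ => ‖z‖) atTop ⊓ 𝓟 S') (𝓝 β) := by
    have h := (tendsto_const_nhds (x := β)).add hzero
    simpa using h
  exact hfinal.congr' (heq.mono fun z h => h.symm)
end
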